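/- Let p be an odd prime, a an integer with 1 ≤ a ≤ (p-1)/2, and r ≥ 1 an integer with 2p - 2a > 2r(2a - 1). Then ∑_{k=0}^{p-1} (2a - 2p)_k ((2a)_k)^{2r} / (k!)^{2r+1} = -∑_{k=0}^{p-2a} (2a-2p)_{p+k} ((2a)_{p+k})^{2r} / ((p+k)!)^{2r+1} as rational numbers. -/

import Mathlib

open Polynomial Finset Function
open scoped fwdDiff

private lemma fwdDiff_iter_zero_fun (n : ℕ) :
    (fwdDiff (1:ℕ))^[n] (fun _ : ℕ => (0:ℚ)) = fun _ => 0 := by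
  induction n with
  | zero => rfl
  | succ n ih => rw [Function.iterate_succ_apply]; simpa [fwdDiff] using ih

private lemma fwdDiff_iter_poly (n : ℕ) : ∀ P : ℚ[X], P.natDegree < n →
    (fwdDiff (1:ℕ))^[n] (fun k : ℕ => P.eval (k:ℚ)) = fun _ => 0 := by
  induction n with
  | zero => intro P h; exact absurd h (Nat.not_lt_zero _)
  | succ n ih =>
    intro P h
    rw [Function.iterate_succ_apply]
    set Q : ℚ[X] := P.comp (X + 1) - P with hQdef
    have hdiff : fwdDiff (1:ℕ) (fun k : ℕ => P.eval (k:ℚ)) = fun k : ℕ => Q.eval (k:ℚ) := by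
      funext k
      simp only [fwdDiff, hQdef, eval_sub, eval_comp, eval_add, eval_X, eval_one]
      push_cast
      ring
    rw [hdiff]
    rcases Nat.eq_zero_or_pos P.natDegree with h0 | h0
    · have : P = C (P.coeff 0) := Polynomial.eq_C_of_natDegree_eq_zero h0
      have hQ0 : Q = 0 := by rw [hQdef, this]; simp
      rw [hQ0]
      simpa using fwdDiff_iter_zero_fun n
    · apply ih
      have hx1 : ((X + 1 : ℚ[X])).natDegree = 1 := by
        simpa using Polynomial.natDegree_X_add_C (1:ℚ)
      have hcompdeg : (P.comp (X + 1)).natDegree = P.natDegree := by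
        simp [natDegree_comp, hx1]
      have hP0 : P ≠ 0 := fun hc => by simp [hc] at h0
      have hcomp0 : P.comp (X + 1) ≠ 0 := fun hc => by
        rw [hc] at hcompdeg; simp at hcompdeg; omega
      have hd : (P.comp (X + 1)).degree = P.degree := by
        rw [degree_eq_natDegree hP0, degree_eq_natDegree hcomp0, hcompdeg]
      have hlc : (P.comp (X + 1)).leadingCoeff = P.leadingCoeff := by
        rw [Polynomial.leadingCoeff_comp (by rw [hx1]; norm_num)]
        have : (X + 1 : ℚ[X]).leadingCoeff = 1 := by
          simpa using Polynomial.leadingCoeff_X_add_C (1:ℚ)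
        simp [this]
      have hlt : Q.degree < P.degree := by
        have := Polynomial.degree_sub_lt hd hcomp0 hlc
        rwa [hd] at this
      rcases eq_or_ne Q 0 with hq | hq
      · rw [hq]; simpa using h0.trans_le (Nat.lt_succ_iff.mp h)
      · exact (Polynomial.natDegree_lt_natDegree hq hlt).trans_le (Nat.lt_succ_iff.mp h)

private lemma alt_sum_poly (n : ℕ) (P : ℚ[X]) (h : P.natDegree < n) :
    ∑ k ∈ range (n + 1), (-1:ℚ)^k * (n.choose k) * P.eval (k:ℚ) = 0 := by
  have h0 : (0:ℚ) = ∑ k ∈ range (n+1), ((-1:ℤ)^(n-k) * (n.choose k)) • P.eval ((k:ℕ):ℚ) := by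
    have h2 := fwdDiff_iter_eq_sum_shift (1:ℕ) (fun k : ℕ => P.eval (k:ℚ)) n 0
    rw [fwdDiff_iter_poly n P h] at h2
    simpa using h2
  have h1 : ∑ k ∈ range (n+1), ((-1:ℚ)^(n-k) * (n.choose k)) * P.eval (k:ℚ) = 0 := by
    rw [show (0:ℚ) = _ from h0]
    refine Finset.sum_congr rfl fun k hk => ?_
    rw [zsmul_eq_mul]
    push_cast
    ring
  calc ∑ k ∈ range (n + 1), (-1:ℚ)^k * (n.choose k) * P.eval (k:ℚ)
      = (-1:ℚ)^n * ∑ k ∈ range (n+1), ((-1:ℚ)^(n-k) * (n.choose k)) * P.eval (k:ℚ) := by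
        rw [Finset.mul_sum]
        refine Finset.sum_congr rfl fun k hk => ?_
        have hk' : k ≤ n := Nat.lt_succ_iff.mp (Finset.mem_range.mp hk)
        have : (-1:ℚ)^(n-k) * (-1:ℚ)^k = (-1:ℚ)^n := by
          rw [← pow_add, Nat.sub_add_cancel hk']
        rw [← this]
        ring_nf
        rw [mul_comm (n-k) 2, pow_mul, neg_one_sq, one_pow, mul_one]
    _ = 0 := by rw [h1, mul_zero]


theorem truncation_equals_neg_tail (p : ℕ) [Fact p.Prime] (hp : Odd p)
    (a : ℕ) (ha1 : 1 ≤ a) (ha2 : 2 * a ≤ p - 1) (r : ℕ) (hr : 1 ≤ r)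
    (hbig : 2 * r * (2 * a - 1) < 2 * p - 2 * a) :
    ∑ k ∈ Finset.range p,
        (ascPochhammer ℚ k).eval (2 * a - 2 * p : ℚ)
          * ((ascPochhammer ℚ k).eval (2 * a : ℚ)) ^ (2 * r)
          / (k.factorial : ℚ) ^ (2 * r + 1)
      = -∑ k ∈ Finset.range (p - 2 * a + 1),
          (ascPochhammer ℚ (p + k)).eval (2 * a - 2 * p : ℚ)
            * ((ascPochhammer ℚ (p + k)).eval (2 * a : ℚ)) ^ (2 * r)
            / ((p + k).factorial : ℚ) ^ (2 * r + 1) := by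
  have hp2 : 2 ≤ p := (Fact.out : p.Prime).two_le
  have hap : 2 * a + 1 ≤ p := by omega
  set n := 2 * p - 2 * a with hn
  set m := 2 * a - 1 with hm
  have hm1 : m + 1 = 2 * a := by omega
  set T : ℕ → ℚ := fun k => (ascPochhammer ℚ k).eval (2 * a - 2 * p : ℚ)
      * ((ascPochhammer ℚ k).eval (2 * a : ℚ)) ^ (2 * r)
      / (k.factorial : ℚ) ^ (2 * r + 1) with hT
  rw [eq_neg_iff_add_eq_zero]
  have hsplit : ∑ k ∈ range p, T k + ∑ k ∈ range (p - 2 * a + 1), T (p + k)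
      = ∑ k ∈ range (n + 1), T k := by
    rw [show n + 1 = p + (p - 2 * a + 1) by omega]
    exact (Finset.sum_range_add T p (p - 2 * a + 1)).symm
  rw [hsplit]
  set P : ℚ[X] := (C (((m.factorial : ℚ))⁻¹) * (ascPochhammer ℚ m).comp (X + 1)) ^ (2 * r)
    with hP
  have hx1 : ((X + 1 : ℚ[X])).natDegree = 1 := by
    simpa using Polynomial.natDegree_X_add_C (1:ℚ)
  have hPdeg : P.natDegree < n := by
    calc P.natDegree ≤ 2 * r * (C (((m.factorial : ℚ))⁻¹)
          * (ascPochhammer ℚ m).comp (X + 1)).natDegree := Polynomial.natDegree_pow_le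
    _ ≤ 2 * r * ((ascPochhammer ℚ m).comp (X + 1)).natDegree := by
        exact Nat.mul_le_mul_left _ (Polynomial.natDegree_C_mul_le _ _)
    _ = 2 * r * m := by rw [natDegree_comp, hx1, ascPochhammer_natDegree, mul_one]
    _ < n := hbig
  have hterm : ∀ k ∈ range (n + 1), T k = (-1:ℚ)^k * (n.choose k) * P.eval (k:ℚ) := by
    intro k hk
    have hk' : k ≤ n := Nat.lt_succ_iff.mp (Finset.mem_range.mp hk)
    have e1 : (2 * (a:ℚ) - 2 * (p:ℚ)) = -((n:ℕ):ℚ) := by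
      rw [hn]
      push_cast [Nat.cast_sub (by omega : 2 * a ≤ 2 * p)]
      ring
    have e2 : (2 * (a:ℚ)) = ((2 * a : ℕ):ℚ) := by push_cast; ring
    have e3 : (ascPochhammer ℚ k).eval (2 * (a:ℚ)) = (((2 * a).ascFactorial k : ℕ) : ℚ) := by
      rw [e2, ← ascPochhammer_eval_cast, ascPochhammer_nat_eq_ascFactorial]
    have e4 : P.eval (k:ℚ)
        = ((m.factorial : ℚ)⁻¹ * (((k+1).ascFactorial m : ℕ) : ℚ)) ^ (2 * r) := by
      rw [hP, eval_pow, eval_mul, eval_C, eval_comp, eval_add, eval_X, eval_one,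
        show (k:ℚ) + 1 = ((k+1 : ℕ):ℚ) by push_cast; ring,
        ← ascPochhammer_eval_cast, ascPochhammer_nat_eq_ascFactorial]
    have key : ((2 * a).ascFactorial k : ℚ) * (m.factorial : ℚ)
        = (((k+1).ascFactorial m : ℕ) : ℚ) * (k.factorial : ℚ) := by
      have k1 : m.factorial * (2 * a).ascFactorial k = (m + k).factorial := by
        conv_lhs => rw [← hm1]
        exact Nat.factorial_mul_ascFactorial m k
      have k2 : k.factorial * (k+1).ascFactorial m = (k + m).factorial :=
        Nat.factorial_mul_ascFactorial k m
      have : (2 * a).ascFactorial k * m.factorial = (k+1).ascFactorial m * k.factorial := by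
        rw [mul_comm, k1, mul_comm ((k+1).ascFactorial m), k2, Nat.add_comm]
      exact_mod_cast congrArg (Nat.cast : ℕ → ℚ) this
    have hD : (ascPochhammer ℚ k).eval (2 * (a:ℚ) - 2 * (p:ℚ))
        = (-1:ℚ)^k * ((k.factorial : ℚ) * (n.choose k : ℚ)) := by
      rw [show (2 * (a:ℚ) - 2 * (p:ℚ)) = -((n:ℕ):ℚ) from e1,
        ascPochhammer_eval_neg_eq_descPochhammer, descPochhammer_eval_eq_descFactorial]
      norm_cast
      rw [Nat.descFactorial_eq_factorial_mul_choose]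
    have hkf : (k.factorial : ℚ) ≠ 0 := by positivity
    have hmf : (m.factorial : ℚ) ≠ 0 := by positivity
    rw [hT]
    simp only
    rw [hD, e3, e4]
    rw [div_eq_iff (by positivity)]
    have key2 : ((m.factorial : ℚ))⁻¹ * (((k+1).ascFactorial m : ℕ) : ℚ)
        = (((2 * a).ascFactorial k : ℕ) : ℚ) / (k.factorial : ℚ) := by
      rw [inv_mul_eq_div, div_eq_div_iff hmf hkf]
      linarith [key]
    rw [key2, div_pow, pow_succ]
    field_simp
  rw [Finset.sum_congr rfl hterm]
  exact alt_sum_poly n P hPdeg
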